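/- Let Φ be a reduced irreducible root system in ℝ^d with d ≥ 2, and let u, v, w ∈ ℂ^d be linearly independent over ℂ with (θ_ℂ(u), θ_ℂ(v), θ_ℂ(w)) ≠ (0,0,0) for every θ ∈ Φ. Then there exists θ ∈ Φ with θ_ℂ(v)² − 4·θ_ℂ(u)·θ_ℂ(w) ≠ 0; equivalently, not every binary quadratic q_θ has a double root, i.e., the set Z contains at least one transversal point. -/
import Mathlib


noncomputable section

/-- The standard inner product on `ℝ^d`. -/
def dotR {d : ℕ} (x y : Fin d → ℝ) : ℝ := ∑ i, x i * y i

/-- `Φ` is a root system in `ℝ^d`: a finite set of nonzero vectors spanning `ℝ^d`,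
closed under the reflections `s_α`, with integral Cartan numbers. -/
def IsRootSystem {d : ℕ} (Φ : Finset (Fin d → ℝ)) : Prop :=
  (∀ α ∈ Φ, α ≠ 0) ∧
  Submodule.span ℝ (Φ : Set (Fin d → ℝ)) = ⊤ ∧
  (∀ α ∈ Φ, ∀ β ∈ Φ, β - (2 * dotR β α / dotR α α) • α ∈ Φ) ∧
  (∀ α ∈ Φ, ∀ β ∈ Φ, ∃ n : ℤ, 2 * dotR β α / dotR α α = (n : ℝ))

/-- `Φ` is reduced: the only multiples of a root `α` in `Φ` are `±α`. -/
def IsReducedRS {d : ℕ} (Φ : Finset (Fin d → ℝ)) : Prop :=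
  ∀ α ∈ Φ, ∀ t : ℝ, t • α ∈ Φ → t = 1 ∨ t = -1

/-- `Φ` is irreducible: it is not the disjoint union of two nonempty mutually
orthogonal subsets. -/
def IsIrreducibleRS {d : ℕ} (Φ : Finset (Fin d → ℝ)) : Prop :=
  ∀ A B : Set (Fin d → ℝ), (Φ : Set (Fin d → ℝ)) = A ∪ B → Disjoint A B →
    (∀ a ∈ A, ∀ b ∈ B, dotR a b = 0) → A = ∅ ∨ B = ∅

/-- The complexification `θ_ℂ : ℂ^d → ℂ` of the linear functional `z ↦ Σ θᵢ zᵢ`. -/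
def thetaC {d : ℕ} (θ : Fin d → ℝ) (z : Fin d → ℂ) : ℂ := ∑ i, (θ i : ℂ) * z i

/-- The zero set `Z(q_θ) ⊆ ℙ¹(ℂ)` of the binary quadratic
`q_θ(z₁,z₂) = θ_ℂ(u)z₁² + θ_ℂ(v)z₁z₂ + θ_ℂ(w)z₂²`. The condition is invariant under
rescaling a representative, so it is well defined on `ℙ¹(ℂ)`. -/
def qZero {d : ℕ} (u v w : Fin d → ℂ) (θ : Fin d → ℝ) :
    Set (Projectivization ℂ (Fin 2 → ℂ)) :=
  {p | thetaC θ u * p.rep 0 ^ 2 + thetaC θ v * (p.rep 0 * p.rep 1)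
        + thetaC θ w * p.rep 1 ^ 2 = 0}

/-- The discriminant `disc(q_θ) = θ_ℂ(v)² − 4·θ_ℂ(u)·θ_ℂ(w)`. -/
def discQ {d : ℕ} (u v w : Fin d → ℂ) (θ : Fin d → ℝ) : ℂ :=
  thetaC θ v ^ 2 - 4 * thetaC θ u * thetaC θ w

lemma key3 (e1 e2 e3 f1 f2 f3 : ℂ) (he : e2^2 = 4*e1*e3) (hf : f2^2 = 4*f1*f3)
    (hb : e2*f2 = 2*(e1*f3 + e3*f1)) (hne : ¬(e1 = 0 ∧ e2 = 0 ∧ e3 = 0)) :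
    ∃ l : ℂ, f1 = l*e1 ∧ f2 = l*e2 ∧ f3 = l*e3 := by
  have m13 : e1*f3 = e3*f1 := by
    have h2 : (e1*f3 - e3*f1)^2 = 0 := by
      linear_combination (-(e2*f2 + 2*(e1*f3+e3*f1))/4) * hb + (f2^2/4)*he + (e1*e3)*hf
    have := pow_eq_zero_iff (n := 2) (by norm_num) |>.mp h2
    exact sub_eq_zero.mp this
  by_cases h1 : e1 = 0
  · have h2 : e2 = 0 := by
      have : e2^2 = 0 := by rw [he, h1]; ring
      exact pow_eq_zero_iff (n := 2) (by norm_num) |>.mp this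
    have h3 : e3 ≠ 0 := fun h => hne ⟨h1, h2, h⟩
    refine ⟨f3/e3, ?_, ?_, by field_simp⟩
    · have : e3 * f1 = 0 := by rw [← m13, h1]; ring
      have hf1 : f1 = 0 := by
        rcases mul_eq_zero.mp this with h | h; exact absurd h h3; exact h
      rw [hf1, h1]; ring
    · have hf1 : f1 = 0 := by
        have : e3 * f1 = 0 := by rw [← m13, h1]; ring
        rcases mul_eq_zero.mp this with h | h; exact absurd h h3; exact h
      have : f2^2 = 0 := by rw [hf, hf1]; ring
      have hf2 : f2 = 0 := pow_eq_zero_iff (n := 2) (by norm_num) |>.mp this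
      rw [hf2, h2]; ring
  · refine ⟨f1/e1, by field_simp, ?_, ?_⟩
    · by_cases h2 : e2 = 0
      · have h3 : e3 = 0 := by
          have : (4:ℂ) * e1 * e3 = 0 := by rw [← he, h2]; ring
          rcases mul_eq_zero.mp this with h | h
          · rcases mul_eq_zero.mp h with h' | h'
            · norm_num at h'
            · exact absurd h' h1
          · exact h
        have hf3 : f3 = 0 := by
          have : e1 * f3 = 0 := by rw [m13, h3]; ring
          rcases mul_eq_zero.mp this with h | h; exact absurd h h1; exact h
        have : f2^2 = 0 := by rw [hf, hf3]; ring
        have hf2 : f2 = 0 := pow_eq_zero_iff (n := 2) (by norm_num) |>.mp this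
        rw [hf2, h2]; ring
      · have key : e2 * (e1*f2 - e2*f1) = 0 := by
          linear_combination e1*hb - f1*he + 2*e1*(sub_eq_zero.mpr m13)
        have : e1*f2 - e2*f1 = 0 := by
          rcases mul_eq_zero.mp key with h | h; exact absurd h h2; exact h
        have h' : e1*f2 = e2*f1 := sub_eq_zero.mp this
        rw [div_mul_eq_mul_div, eq_comm, div_eq_iff h1]
        linear_combination -h'
    · rw [div_mul_eq_mul_div, eq_comm, div_eq_iff h1]
      linear_combination -m13

lemma dotR_comm {d : ℕ} (x y : Fin d → ℝ) : dotR x y = dotR y x := by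
  simp [dotR, mul_comm]

lemma dotR_self_ne_zero {d : ℕ} {x : Fin d → ℝ} (hx : x ≠ 0) : dotR x x ≠ 0 := by
  have h : ∃ i, x i ≠ 0 := by
    by_contra h; push_neg at h; exact hx (funext h)
  obtain ⟨i, hi⟩ := h
  have : 0 < dotR x x :=
    Finset.sum_pos' (fun j _ => mul_self_nonneg _) ⟨i, Finset.mem_univ i, mul_self_pos.mpr hi⟩
  exact ne_of_gt this

lemma thetaC_sub_smul {d : ℕ} (a b : Fin d → ℝ) (c : ℝ) (z : Fin d → ℂ) :
    thetaC (b - c • a) z = thetaC b z - (c:ℂ) * thetaC a z := by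
  simp only [thetaC, Pi.sub_apply, Pi.smul_apply, smul_eq_mul, Complex.ofReal_sub,
    Complex.ofReal_mul, sub_mul, Finset.sum_sub_distrib, Finset.mul_sum]
  congr 1
  exact Finset.sum_congr rfl fun i _ => by ring

lemma thetaC_add_left {d : ℕ} (a b : Fin d → ℝ) (z : Fin d → ℂ) :
    thetaC (a + b) z = thetaC a z + thetaC b z := by
  simp only [thetaC, Pi.add_apply, Complex.ofReal_add, add_mul, Finset.sum_add_distrib]

lemma thetaC_smul_left {d : ℕ} (r : ℝ) (a : Fin d → ℝ) (z : Fin d → ℂ) :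
    thetaC (r • a) z = (r:ℂ) * thetaC a z := by
  simp only [thetaC, Pi.smul_apply, smul_eq_mul, Complex.ofReal_mul, Finset.mul_sum]
  exact Finset.sum_congr rfl fun i _ => by ring

lemma thetaC_zero_left {d : ℕ} (z : Fin d → ℂ) : thetaC (0 : Fin d → ℝ) z = 0 := by
  simp [thetaC]

lemma thetaC_combo {d : ℕ} (θ : Fin d → ℝ) (u v w : Fin d → ℂ) (n1 n2 n3 : ℂ) :
    thetaC θ (n1 • u + n2 • v + n3 • w)
      = n1 * thetaC θ u + n2 * thetaC θ v + n3 * thetaC θ w := by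
  simp only [thetaC, Pi.add_apply, Pi.smul_apply, smul_eq_mul, Finset.mul_sum]
  rw [← Finset.sum_add_distrib, ← Finset.sum_add_distrib]
  exact Finset.sum_congr rfl fun i _ => by ring

lemma prop_step {d : ℕ} (Φ : Finset (Fin d → ℝ)) (hRS : IsRootSystem Φ) (u v w : Fin d → ℂ)
    (hdisc : ∀ θ ∈ Φ, discQ u v w θ = 0)
    (a b : Fin d → ℝ) (ha : a ∈ Φ) (hb : b ∈ Φ) (hab : dotR a b ≠ 0)
    (hne : ¬(thetaC a u = 0 ∧ thetaC a v = 0 ∧ thetaC a w = 0)) :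
    ∃ l : ℂ, thetaC b u = l * thetaC a u ∧ thetaC b v = l * thetaC a v ∧
      thetaC b w = l * thetaC a w := by
  set c : ℝ := 2 * dotR b a / dotR a a with hc
  have hanz : a ≠ 0 := hRS.1 a ha
  have hcz : c ≠ 0 := by
    have h1 : dotR b a ≠ 0 := by rw [dotR_comm]; exact hab
    have h2 : dotR a a ≠ 0 := dotR_self_ne_zero hanz
    exact div_ne_zero (mul_ne_zero two_ne_zero h1) h2
  have hmem : b - c • a ∈ Φ := hRS.2.2.1 a ha b hb
  have h0 : discQ u v w (b - c • a) = 0 := hdisc _ hmem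
  have ha0 : discQ u v w a = 0 := hdisc a ha
  have hb0 : discQ u v w b = 0 := hdisc b hb
  rw [discQ, thetaC_sub_smul, thetaC_sub_smul, thetaC_sub_smul] at h0
  rw [discQ] at ha0 hb0
  have hcc : (c:ℂ) ≠ 0 := Complex.ofReal_ne_zero.mpr hcz
  have hX : (c:ℂ) * (thetaC a v * thetaC b v
      - 2*(thetaC a u * thetaC b w + thetaC a w * thetaC b u)) = 0 := by
    linear_combination (1/2)*hb0 + ((c:ℂ)^2/2)*ha0 - (1/2)*h0
  have hbil : thetaC a v * thetaC b v
      = 2*(thetaC a u * thetaC b w + thetaC a w * thetaC b u) := by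
    have := (mul_eq_zero.mp hX).resolve_left hcc
    exact sub_eq_zero.mp this
  exact key3 _ _ _ _ _ _ (by linear_combination ha0) (by linear_combination hb0) hbil hne

/-- If `Φ` is reduced irreducible of rank `d ≥ 2` and `u, v, w ∈ ℂ^d` are
linearly independent with `(θ_ℂ(u), θ_ℂ(v), θ_ℂ(w)) ≠ 0` for every root `θ`, then some root
`θ ∈ Φ` has `disc(q_θ) = θ_ℂ(v)² − 4·θ_ℂ(u)·θ_ℂ(w) ≠ 0`. -/
theorem stmt15 {d : ℕ} (hd : 2 ≤ d) (Φ : Finset (Fin d → ℝ))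
    (hRS : IsRootSystem Φ) (hred : IsReducedRS Φ) (hirr : IsIrreducibleRS Φ)
    (u v w : Fin d → ℂ) (hli : LinearIndependent ℂ ![u, v, w])
    (hnz : ∀ θ ∈ Φ, ¬ (thetaC θ u = 0 ∧ thetaC θ v = 0 ∧ thetaC θ w = 0)) :
    ∃ θ ∈ Φ, discQ u v w θ ≠ 0 := by
  by_contra hcon
  push_neg at hcon
  have hdisc : ∀ θ ∈ Φ, discQ u v w θ = 0 := hcon
  have hspan := hRS.2.1
  -- Φ is nonempty
  have hΦne : ∃ α, α ∈ Φ := by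
    by_contra hemp
    push_neg at hemp
    have hE : (Φ : Set (Fin d → ℝ)) = ∅ := by
      ext x; simp [hemp x]
    rw [hE, Submodule.span_empty] at hspan
    have h1 : (1 : Fin d → ℝ) ∈ (⊥ : Submodule ℝ (Fin d → ℝ)) := by
      rw [hspan]; trivial
    rw [Submodule.mem_bot] at h1
    have := congrFun h1 ⟨0, by omega⟩
    norm_num at this
  obtain ⟨α, hα⟩ := hΦne
  -- all roots have proportional triples
  have hprop : ∀ θ ∈ Φ, ∃ l : ℂ, thetaC θ u = l * thetaC α u ∧
      thetaC θ v = l * thetaC α v ∧ thetaC θ w = l * thetaC α w := by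
    set A : Set (Fin d → ℝ) := {x | x ∈ Φ ∧ ∃ l : ℂ, thetaC x u = l * thetaC α u ∧
      thetaC x v = l * thetaC α v ∧ thetaC x w = l * thetaC α w} with hAdef
    set B : Set (Fin d → ℝ) := {x | x ∈ Φ ∧ ¬ ∃ l : ℂ, thetaC x u = l * thetaC α u ∧
      thetaC x v = l * thetaC α v ∧ thetaC x w = l * thetaC α w} with hBdef
    have hUnion : (Φ : Set (Fin d → ℝ)) = A ∪ B := by
      ext x
      simp only [hAdef, hBdef, Set.mem_union, Set.mem_setOf_eq, Finset.mem_coe]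
      constructor
      · intro hx
        by_cases hp : ∃ l : ℂ, thetaC x u = l * thetaC α u ∧
            thetaC x v = l * thetaC α v ∧ thetaC x w = l * thetaC α w
        · exact Or.inl ⟨hx, hp⟩
        · exact Or.inr ⟨hx, hp⟩
      · rintro (⟨h, -⟩ | ⟨h, -⟩) <;> exact h
    have hDisj : Disjoint A B := by
      rw [Set.disjoint_left]
      rintro x ⟨_, hx⟩ ⟨_, hx'⟩
      exact hx' hx
    have hOrth : ∀ a ∈ A, ∀ b ∈ B, dotR a b = 0 := by
      rintro a ⟨haΦ, l, hl1, hl2, hl3⟩ b ⟨hbΦ, hbP⟩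
      by_contra hab
      obtain ⟨m, hm1, hm2, hm3⟩ :=
        prop_step Φ hRS u v w hdisc a b haΦ hbΦ hab (hnz a haΦ)
      exact hbP ⟨m * l, by rw [hm1, hl1]; ring, by rw [hm2, hl2]; ring,
        by rw [hm3, hl3]; ring⟩
    rcases hirr A B hUnion hDisj hOrth with hA | hB
    · exfalso
      have : α ∈ A := ⟨hα, 1, by ring, by ring, by ring⟩
      rw [hA] at this
      exact this
    · intro θ hθ
      by_contra hP
      have : θ ∈ B := ⟨hθ, hP⟩
      rw [hB] at this
      exact this
  -- choose a nonzero (n1,n2,n3) orthogonal to the triple of α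
  obtain ⟨n1, n2, n3, hn, horth⟩ : ∃ n1 n2 n3 : ℂ, ¬(n1 = 0 ∧ n2 = 0 ∧ n3 = 0) ∧
      n1 * thetaC α u + n2 * thetaC α v + n3 * thetaC α w = 0 := by
    by_cases h12 : thetaC α u = 0 ∧ thetaC α v = 0
    · exact ⟨1, 0, 0, by simp, by rw [h12.1]; ring⟩
    · refine ⟨thetaC α v, -(thetaC α u), 0, ?_, by ring⟩
      rintro ⟨hb1, hb2, -⟩
      exact h12 ⟨by rw [← neg_neg (thetaC α u), hb2]; ring, hb1⟩
  -- the combination z vanishes against every root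
  set z : Fin d → ℂ := n1 • u + n2 • v + n3 • w with hzdef
  have hz : ∀ θ ∈ Φ, thetaC θ z = 0 := by
    intro θ hθ
    obtain ⟨l, h1, h2, h3⟩ := hprop θ hθ
    rw [hzdef, thetaC_combo, h1, h2, h3]
    linear_combination l * horth
  -- z vanishes against all of ℝ^d, hence z = 0
  have hall : ∀ x : Fin d → ℝ, thetaC x z = 0 := by
    intro x
    have hx : x ∈ Submodule.span ℝ (Φ : Set (Fin d → ℝ)) := by
      rw [hspan]; trivial
    refine Submodule.span_induction ?_ ?_ ?_ ?_ hx
    · intro y hy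
      exact hz y hy
    · exact thetaC_zero_left z
    · intro y y' _ _ hy hy'
      rw [thetaC_add_left, hy, hy']; ring
    · intro r y _ hy
      rw [thetaC_smul_left, hy]; ring
  have hz0 : z = 0 := by
    funext j
    have := hall (Pi.single j 1)
    rw [thetaC] at this
    rw [Finset.sum_eq_single j (fun i _ hij => by simp [Pi.single_apply, hij])
      (fun h => absurd (Finset.mem_univ j) h)] at this
    simpa using this
  -- contradiction with linear independence
  have hlin := Fintype.linearIndependent_iff.mp hli ![n1, n2, n3]
  have hsum : ∑ i, (![n1, n2, n3] i) • (![u, v, w] i) = 0 := by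
    rw [Fin.sum_univ_three]
    simpa [smul_eq_mul] using hz0
  have := hlin hsum
  exact hn ⟨this 0, this 1, this 2⟩


end
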